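/- Let N ≥ 1 be an integer, let a = (a₁,…,a_N) ∈ ℂ^N with Re(a_i) > 0 for every i, let x ∈ ℂ with Re(x) > 0, and let s ∈ ℂ with Re(s) > N. Then the family indexed by n = (n₁,…,n_N) ∈ (ℤ_{≥0})^N of terms exp(−s · Log(x + n₁a₁ + ⋯ + n_N a_N)) is absolutely summable; i.e. the Barnes multiple zeta series ζ_N(s, x | a) = ∑_{n ∈ (ℤ_{≥0})^N} (x + n·a)^{−s} converges absolutely for Re(s) > N. -/

import Mathlib

open Complex Real Finset

set_option maxHeartbeats 1000000 in
lemma summable_pi_prod_aux : ∀ (N : ℕ) (f : ℕ → ℝ), Summable f → (∀ m, 0 ≤ f m) →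
    Summable fun n : Fin N → ℕ => ∏ i, f (n i) := by
  intro N
  induction N with
  | zero =>
    intro f _ _
    exact Summable.of_finite
  | succ N ih =>
    intro f hf h0
    have h : Summable fun p : ℕ × (Fin N → ℕ) => f p.1 * ∏ i, f (p.2 i) :=
      Summable.mul_of_nonneg (g := fun v : Fin N → ℕ => ∏ i, f (v i)) hf (ih f hf h0) h0
        (fun v => Finset.prod_nonneg fun i _ => h0 _)
    have := h.comp_injective (Fin.consEquiv fun _ : Fin (N+1) => ℕ).symm.injective
    refine this.congr fun n => ?_
    simp [Fin.consEquiv, Fin.prod_univ_succ]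
    exact Or.inl rfl

theorem barnes_zeta_summable (N : ℕ) (hN : 1 ≤ N) (a : Fin N → ℂ)
    (ha : ∀ i, 0 < (a i).re) (x : ℂ) (hx : 0 < x.re) (s : ℂ) (hs : (N : ℝ) < s.re) :
    Summable fun n : Fin N → ℕ =>
      ‖Complex.exp (-s * Complex.log (x + ∑ i, (n i : ℂ) * a i))‖ := by
  have hne : (Finset.univ : Finset (Fin N)).Nonempty := by
    simpa [Finset.univ_nonempty_iff] using Fin.pos_iff_nonempty.mp (by omega)
  set δ : ℝ := min x.re (Finset.univ.inf' hne fun i => (a i).re) with hδdef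
  have hδ : 0 < δ := by
    refine lt_min hx ?_
    rw [Finset.lt_inf'_iff]
    exact fun i _ => ha i
  have hδa : ∀ i, δ ≤ (a i).re := fun i =>
    (min_le_right _ _).trans (Finset.inf'_le _ (Finset.mem_univ i))
  set σ := s.re with hσ
  have hσpos : 0 < σ := lt_trans (by positivity) hs
  set t : ℝ := σ / N with ht
  have hNpos : (0:ℝ) < N := by positivity
  have ht1 : 1 < t := by
    rw [ht, lt_div_iff₀ hNpos, one_mul]
    exact hs
  -- basic facts about z = x + ∑ n i * a i
  have hzre : ∀ n : Fin N → ℕ, δ * (1 + ∑ i, (n i : ℝ)) ≤ (x + ∑ i, (n i : ℂ) * a i).re := by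
    intro n
    have : (x + ∑ i, (n i : ℂ) * a i).re = x.re + ∑ i, (n i : ℝ) * (a i).re := by
      simp [Complex.add_re, Complex.re_sum]
    rw [this, mul_add, mul_one, Finset.mul_sum]
    refine add_le_add (min_le_left _ _) (Finset.sum_le_sum fun i _ => ?_)
    rw [mul_comm δ]
    exact mul_le_mul_of_nonneg_left (hδa i) (Nat.cast_nonneg _)
  have hzre' : ∀ n : Fin N → ℕ, 0 < (x + ∑ i, (n i : ℂ) * a i).re := by
    intro n
    refine lt_of_lt_of_le ?_ (hzre n)
    have : (0:ℝ) ≤ ∑ i, (n i : ℝ) := Finset.sum_nonneg fun i _ => Nat.cast_nonneg _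
    nlinarith
  -- the comparison series
  set C : ℝ := Real.exp (|s.im| * (π / 2)) * δ ^ (-σ) with hC
  have hsum : Summable fun n : Fin N → ℕ => C * ∏ i, ((n i : ℝ) + 1) ^ (-t) := by
    refine Summable.mul_left C (summable_pi_prod_aux N (fun m => ((m:ℝ)+1) ^ (-t)) ?_
      (fun m => Real.rpow_nonneg (by positivity) _))
    have hbase : Summable fun m : ℕ => (m : ℝ) ^ (-t) :=
      (Real.summable_nat_rpow).mpr (by linarith)
    have := hbase.comp_injective (add_left_injective 1)
    refine this.congr fun m => ?_
    simp only [Function.comp_apply]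
    push_cast
    rw [add_comm]
  refine hsum.of_nonneg_of_le (fun n => norm_nonneg _) fun n => ?_
  set z : ℂ := x + ∑ i, (n i : ℂ) * a i with hz
  have hz0 : z ≠ 0 := by
    intro h
    have := hzre' n
    rw [← hz, h] at this
    simp at this
  have habs : 0 < ‖z‖ := norm_pos_iff.mpr hz0
  -- norm computation
  have hnorm : ‖Complex.exp (-s * Complex.log z)‖
      = Real.exp (-(σ * Real.log (‖z‖)) + s.im * Complex.arg z) := by
    rw [Complex.norm_exp]
    congr 1
    simp [Complex.mul_re, Complex.log_re, Complex.log_im, hσ]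
    ring
  rw [hnorm, Real.exp_add]
  have h1 : Real.exp (-(σ * Real.log (‖z‖))) = (‖z‖) ^ (-σ) := by
    rw [Real.rpow_def_of_pos habs]
    ring_nf
  have h2 : Real.exp (s.im * Complex.arg z) ≤ Real.exp (|s.im| * (π / 2)) := by
    refine Real.exp_le_exp.mpr ?_
    calc s.im * Complex.arg z ≤ |s.im * Complex.arg z| := le_abs_self _
      _ = |s.im| * |Complex.arg z| := abs_mul _ _
      _ ≤ |s.im| * (π / 2) := by
          refine mul_le_mul_of_nonneg_left ?_ (abs_nonneg _)
          exact Complex.abs_arg_le_pi_div_two_iff.mpr (hzre' n).le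
  have hS : (0:ℝ) ≤ ∑ i, (n i : ℝ) := Finset.sum_nonneg fun i _ => Nat.cast_nonneg _
  have h3 : (‖z‖) ^ (-σ) ≤ (δ * (1 + ∑ i, (n i : ℝ))) ^ (-σ) := by
    refine Real.rpow_le_rpow_of_nonpos (by nlinarith) ?_ (by linarith)
    exact le_trans (hzre n) (Complex.re_le_norm z)
  have h4 : (δ * (1 + ∑ i, (n i : ℝ))) ^ (-σ)
      = δ ^ (-σ) * (1 + ∑ i, (n i : ℝ)) ^ (-σ) :=
    Real.mul_rpow hδ.le (by linarith)
  have h5 : (1 + ∑ i, (n i : ℝ)) ^ (-σ) ≤ ∏ i, ((n i : ℝ) + 1) ^ (-t) := by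
    have hprodle : ∏ i, ((n i : ℝ) + 1) ≤ (1 + ∑ i, (n i : ℝ)) ^ (N : ℕ) := by
      rw [← Fin.prod_const N (1 + ∑ i, (n i : ℝ))]
      refine Finset.prod_le_prod (fun i _ => by positivity) fun i _ => ?_
      have : (n i : ℝ) ≤ ∑ j, (n j : ℝ) :=
        Finset.single_le_sum (f := fun j => (n j : ℝ)) (fun j _ => Nat.cast_nonneg _)
          (Finset.mem_univ i)
      linarith
    have hprodpos : (0:ℝ) < ∏ i, ((n i : ℝ) + 1) :=
      Finset.prod_pos fun i _ => by positivity
    calc (1 + ∑ i, (n i : ℝ)) ^ (-σ)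
        = (((1 + ∑ i, (n i : ℝ)) ^ (N:ℕ)) : ℝ) ^ (-t) := by
          rw [← Real.rpow_natCast (1 + ∑ i, (n i : ℝ)) N, ← Real.rpow_mul (by linarith)]
          congr 1
          rw [ht]
          field_simp
      _ ≤ (∏ i, ((n i : ℝ) + 1)) ^ (-t) :=
          Real.rpow_le_rpow_of_nonpos hprodpos hprodle (by linarith)
      _ = ∏ i, ((n i : ℝ) + 1) ^ (-t) :=
          Real.finset_prod_rpow _ _ (fun i _ => by positivity) _ |>.symm
  calc Real.exp (-(σ * Real.log (‖z‖))) * Real.exp (s.im * Complex.arg z)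
      ≤ (‖z‖) ^ (-σ) * Real.exp (|s.im| * (π / 2)) := by
        rw [h1]
        exact mul_le_mul_of_nonneg_left h2 (Real.rpow_nonneg habs.le _)
    _ ≤ (δ * (1 + ∑ i, (n i : ℝ))) ^ (-σ) * Real.exp (|s.im| * (π / 2)) :=
        mul_le_mul_of_nonneg_right h3 (Real.exp_nonneg _)
    _ = C * (1 + ∑ i, (n i : ℝ)) ^ (-σ) := by rw [h4, hC]; ring
    _ ≤ C * ∏ i, ((n i : ℝ) + 1) ^ (-t) := by
        refine mul_le_mul_of_nonneg_left h5 ?_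
        rw [hC]; positivity
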